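/- arXiv:2303.06443 — 2 statements merged into one kernel-verified Lean document; each statement's English description precedes it below -/
import Mathlib

section
/- Let 𝐏 := P − i M_χ. If u ∈ L², ω ∈ ℂ with Im ω ≥ 0, and 𝐏u = ωu, then (χ + Im ω)·u = 0 almost everywhere and Pu = (Re ω)u. (This is the main computation in the proof of Lemma 3.1 of the paper: 0 = Im⟨(𝐏 − ω)u, u⟩ = −∫ (χ + Im ω)|u|² dμ forces (χ + Im ω)u = 0, hence (P − Re ω)u = 0.) -/
open MeasureTheory

/-- Let `𝐏 := P - i Mχ` on `L²(μ; ℂ)`, where `P` is bounded self-adjoint,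
`χ ≥ 0` is bounded measurable and `Mχ` is multiplication by `χ`. If `Im ω ≥ 0` and
`𝐏 u = ω u`, then `(χ + Im ω) · u = 0` a.e. and `P u = (Re ω) u`. -/
theorem statement0 {X : Type*} [MeasurableSpace X] (μ : Measure X)
    (χ : X → ℝ) (hχ_meas : Measurable χ) (hχ_bdd : ∃ C : ℝ, ∀ x, |χ x| ≤ C)
    (hχ_nonneg : ∀ x, 0 ≤ χ x)
    (P : Lp ℂ 2 μ →L[ℂ] Lp ℂ 2 μ) (hP : IsSelfAdjoint P)
    (Mχ : Lp ℂ 2 μ →L[ℂ] Lp ℂ 2 μ)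
    (hMχ : ∀ u : Lp ℂ 2 μ, (Mχ u : X → ℂ) =ᵐ[μ] fun x => (χ x : ℂ) * u x)
    (u : Lp ℂ 2 μ) (ω : ℂ) (hω : 0 ≤ ω.im)
    (hu : (P - Complex.I • Mχ) u = ω • u) :
    ((fun x => ((χ x : ℂ) + (ω.im : ℂ)) * u x) =ᵐ[μ] 0) ∧ P u = (ω.re : ℂ) • u := by
  obtain ⟨C, hC⟩ := hχ_bdd
  -- integrability facts
  have hu2 : Integrable (fun x => ‖(u : X → ℂ) x‖^2) μ := by
    have h2 := (L2.integrable_inner (𝕜 := ℂ) u u).re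
    refine h2.congr (Filter.Eventually.of_forall fun x => ?_)
    simp [← Complex.normSq_apply, Complex.sq_norm, Complex.normSq_apply, ← Complex.ofReal_pow, Complex.ofReal_re]
  have hχu2 : Integrable (fun x => χ x * ‖(u : X → ℂ) x‖^2) μ :=
    hu2.bdd_mul (c := C) (hχ_meas.aestronglyMeasurable) (Filter.Eventually.of_forall fun x => by simpa [Real.norm_eq_abs] using hC x)
  -- ⟪u, P u⟫ is real
  have hPreal : (inner ℂ u (P u) : ℂ).im = 0 := by
    have h1 : (inner ℂ u (P u) : ℂ) = inner ℂ (P u) u := by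
      conv_lhs => rw [← hP.adjoint_eq]
      rw [ContinuousLinearMap.adjoint_inner_right]
    have h3 := congrArg Complex.im (h1.trans (inner_conj_symm (P u) u).symm)
    simp only [Complex.conj_im] at h3
    linarith
  -- the eigenvalue equation paired with u
  have key : (inner ℂ u (P u) : ℂ) - Complex.I * inner ℂ u (Mχ u) = ω * inner ℂ u u := by
    have h := congrArg (fun v : Lp ℂ 2 μ => (inner ℂ u v : ℂ)) hu
    simpa [inner_sub_right, inner_smul_right] using h
  -- values of the two inner products as real integrals
  have hJ : (inner ℂ u (Mχ u) : ℂ) = ((∫ x, χ x * ‖(u : X → ℂ) x‖^2 ∂μ : ℝ) : ℂ) := by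
    rw [L2.inner_def]
    have step : ∫ a, (inner ℂ ((u : X → ℂ) a) ((Mχ u : X → ℂ) a) : ℂ) ∂μ
        = ∫ a, ((χ a * ‖(u : X → ℂ) a‖^2 : ℝ) : ℂ) ∂μ := by
      refine integral_congr_ae ?_
      filter_upwards [hMχ u] with x hx
      rw [hx]
      simp only [RCLike.inner_apply, RCLike.star_def, Complex.ofReal_mul]
      rw [mul_assoc, RCLike.mul_conj]
      push_cast
      rfl
    rw [step]
    exact integral_ofReal
  have hN : (inner ℂ u u : ℂ) = ((∫ x, ‖(u : X → ℂ) x‖^2 ∂μ : ℝ) : ℂ) := by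
    rw [L2.inner_def]
    have step : ∫ a, (inner ℂ ((u : X → ℂ) a) ((u : X → ℂ) a) : ℂ) ∂μ
        = ∫ a, ((‖(u : X → ℂ) a‖^2 : ℝ) : ℂ) ∂μ := by
      refine integral_congr_ae (Filter.Eventually.of_forall fun x => ?_)
      simp only [RCLike.inner_apply, RCLike.star_def]
      rw [RCLike.mul_conj]
      push_cast
      rfl
    rw [step]
    exact integral_ofReal
  -- take imaginary parts
  have him : -(∫ x, χ x * ‖(u : X → ℂ) x‖^2 ∂μ) = ω.im * ∫ x, ‖(u : X → ℂ) x‖^2 ∂μ := by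
    have := congrArg Complex.im key
    rw [hJ, hN] at this
    simpa [hPreal, Complex.mul_im] using this
  have hzero : ∫ x, (χ x + ω.im) * ‖(u : X → ℂ) x‖^2 ∂μ = 0 := by
    simp only [add_mul]
    rw [integral_add hχu2 (hu2.const_mul ω.im)]
    simp only [integral_const_mul]
    linarith
  have h0 : ∀ᵐ x ∂μ, (χ x + ω.im) * ‖(u : X → ℂ) x‖^2 = 0 := by
    have hnn : 0 ≤ᵐ[μ] fun x => (χ x + ω.im) * ‖(u : X → ℂ) x‖^2 :=
      Filter.Eventually.of_forall fun x =>
        mul_nonneg (by linarith [hχ_nonneg x]) (sq_nonneg _)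
    have hint : Integrable (fun x => (χ x + ω.im) * ‖(u : X → ℂ) x‖^2) μ := by
      refine (hχu2.add (hu2.const_mul ω.im)).congr (Filter.Eventually.of_forall fun x => ?_)
      simp only [Pi.add_apply]; ring
    exact ((integral_eq_zero_iff_of_nonneg_ae hnn hint).mp hzero)
  -- first conclusion
  have part1 : (fun x => ((χ x : ℂ) + (ω.im : ℂ)) * (u : X → ℂ) x) =ᵐ[μ] 0 := by
    filter_upwards [h0] with x hx
    rcases mul_eq_zero.mp hx with h | h
    · simp only [Pi.zero_apply, ← Complex.ofReal_add, h, Complex.ofReal_zero, zero_mul]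
    · have : (u : X → ℂ) x = 0 := by
        have := pow_eq_zero_iff (n := 2) (by norm_num) |>.mp h
        simpa using this
      simp [this]
  refine ⟨part1, ?_⟩
  -- identify Mχ u
  have hM : Mχ u = (-(ω.im : ℂ)) • u := by
    refine Lp.ext ?_
    filter_upwards [hMχ u, part1, Lp.coeFn_smul (-(ω.im : ℂ)) u] with x hx hz hs
    rw [hx, hs]
    have : (χ x : ℂ) * (u : X → ℂ) x + (ω.im : ℂ) * (u : X → ℂ) x = 0 := by
      have := hz
      simp only [Pi.zero_apply] at this
      linear_combination this
    simp only [Pi.smul_apply, smul_eq_mul]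
    linear_combination this
  -- conclude
  have hPu : P u - Complex.I • (Mχ u) = ω • u := by
    simpa [ContinuousLinearMap.sub_apply, ContinuousLinearMap.smul_apply] using hu
  rw [hM] at hPu
  have : P u = (ω + Complex.I * (-(ω.im : ℂ))) • u := by
    rw [add_smul, ← smul_smul]
    linear_combination (norm := module) hPu
  rw [this]
  congr 1
  apply Complex.ext <;> simp
end

section
/- Let 𝐏 := P − i M_χ. If ω ∈ ℂ with Im ω ≥ 0 is an eigenvalue of 𝐏, i.e. there exists u ∈ L² with u ≠ 0 and 𝐏u = ωu, then Re ω is an eigenvalue of P (with the same eigenvector u). In other words, {Re ω : ω ∈ Spec_pp(𝐏), Im ω ≥ 0} ⊆ Spec_pp(P). -/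
open MeasureTheory

/-- Let `𝐏 := P - i Mχ` on `L²(μ; ℂ)`. If `ω` with `Im ω ≥ 0` is an
eigenvalue of `𝐏` with eigenvector `u ≠ 0`, then `Re ω` is an eigenvalue of `P`
with the same eigenvector `u`. -/
theorem statement1 {X : Type*} [MeasurableSpace X] (μ : Measure X)
    (χ : X → ℝ) (hχ_meas : Measurable χ) (hχ_bdd : ∃ C : ℝ, ∀ x, |χ x| ≤ C)
    (hχ_nonneg : ∀ x, 0 ≤ χ x)
    (P : Lp ℂ 2 μ →L[ℂ] Lp ℂ 2 μ) (hP : IsSelfAdjoint P)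
    (Mχ : Lp ℂ 2 μ →L[ℂ] Lp ℂ 2 μ)
    (hMχ : ∀ u : Lp ℂ 2 μ, (Mχ u : X → ℂ) =ᵐ[μ] fun x => (χ x : ℂ) * u x)
    (ω : ℂ) (hω : 0 ≤ ω.im)
    (u : Lp ℂ 2 μ) (hu_ne : u ≠ 0)
    (hu : (P - Complex.I • Mχ) u = ω • u) :
    P u = (ω.re : ℂ) • u ∧ u ≠ 0 := by
  refine ⟨?_, hu_ne⟩
  have hPu : P u = ω • u + Complex.I • Mχ u := by
    rw [ContinuousLinearMap.sub_apply, ContinuousLinearMap.smul_apply,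
      sub_eq_iff_eq_add] at hu
    exact hu
  set v := Mχ u with hv
  have hv_ae : (v : X → ℂ) =ᵐ[μ] fun x => (χ x : ℂ) * u x := hMχ u
  -- the pointwise inner product with the explicit real-valued form
  have h_ptwise : (fun x => (inner ℂ (u x) (v x) : ℂ)) =ᵐ[μ]
      fun x => ((χ x * Complex.normSq (u x) : ℝ) : ℂ) := by
    filter_upwards [hv_ae] with x hx
    rw [RCLike.inner_apply, hx]
    calc (χ x : ℂ) * u x * (starRingEnd ℂ) (u x)
        = (χ x : ℂ) * ((starRingEnd ℂ) (u x) * u x) := by ring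
      _ = (χ x : ℂ) * ((Complex.normSq (u x) : ℝ) : ℂ) := by
          rw [Complex.normSq_eq_conj_mul_self]
      _ = ((χ x * Complex.normSq (u x) : ℝ) : ℂ) := by push_cast; ring
  have h_int : Integrable (fun x => ((χ x * Complex.normSq (u x) : ℝ) : ℂ)) μ :=
    (L2.integrable_inner u v).congr h_ptwise
  have h_int_re : Integrable (fun x => χ x * Complex.normSq (u x)) μ := by
    have := h_int.re
    refine this.congr (Filter.Eventually.of_forall fun x => ?_)
    simp
  have h_inner_eq : (inner ℂ u v : ℂ) = ((∫ x, χ x * Complex.normSq (u x) ∂μ : ℝ) : ℂ) := by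
    rw [L2.inner_def, integral_congr_ae h_ptwise]
    exact integral_ofReal
  set s : ℝ := ∫ x, χ x * Complex.normSq (u x) ∂μ with hs_def
  have hs_nonneg : 0 ≤ s :=
    integral_nonneg fun x => mul_nonneg (hχ_nonneg x) (Complex.normSq_nonneg _)
  -- the key identity
  have key : (inner ℂ u (P u) : ℂ) = ω * ((‖u‖^2 : ℝ) : ℂ) + Complex.I * (s : ℂ) := by
    rw [hPu, inner_add_right, inner_smul_right, inner_smul_right, h_inner_eq,
      inner_self_eq_norm_sq_to_K]
    norm_cast
  have him : (inner ℂ u (P u) : ℂ).im = 0 := by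
    have h1 : (starRingEnd ℂ) (inner ℂ u (P u) : ℂ) = (inner ℂ u (P u) : ℂ) := by
      rw [inner_conj_symm]
      exact hP.isSymmetric u u
    rw [Complex.conj_eq_iff_im] at h1
    exact h1
  have him2 : ω.im * ‖u‖^2 + s = 0 := by
    have := congrArg Complex.im key
    rw [him] at this
    simp only [Complex.add_im, Complex.mul_im, Complex.ofReal_re, Complex.ofReal_im,
      Complex.I_re, Complex.I_im] at this
    push_cast at this
    linarith [this]
  have hnorm_pos : 0 < ‖u‖^2 := by
    have : 0 < ‖u‖ := norm_pos_iff.mpr hu_ne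
    positivity
  have hωim : ω.im = 0 := by nlinarith
  have hs0 : s = 0 := by nlinarith
  -- deduce that χ·u = 0 a.e., hence Mχ u = 0
  have hzero : (fun x => χ x * Complex.normSq (u x)) =ᵐ[μ] 0 := by
    rw [← integral_eq_zero_iff_of_nonneg
      (fun x => mul_nonneg (hχ_nonneg x) (Complex.normSq_nonneg _)) h_int_re]
    exact hs0
  have hv0 : v = 0 := by
    refine Lp.ext ?_
    refine (hv_ae.trans ?_).trans (Lp.coeFn_zero ℂ 2 μ).symm
    filter_upwards [hzero] with x hx
    simp only [Pi.zero_apply] at hx ⊢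
    rcases mul_eq_zero.mp hx with h | h
    · simp [h]
    · have : u x = 0 := Complex.normSq_eq_zero.mp h
      simp [this]
  rw [hPu, hv0, smul_zero, add_zero]
  congr 1
  exact Complex.ext rfl hωim
end
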